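/- If a forward label l₁ = (i, c₁, S₁, R₁) dominates l₂ = (i, c₂, S₂, R₂) — meaning c₁ ≤ c₂, S₁ ⊆ S₂, and R₁ ≤ R₂ componentwise — then for every feasible extension of l₂ along an arc (i,j), the corresponding extension of l₁ along (i,j) is also feasible, and the extended label of l₁ dominates the extended label of l₂. -/

import Mathlib

/-- Dominance between forward labels `(i, c, S, R)` at the same node, with fixed
arc costs `carc`, nonnegative arc resource consumptions `r`, and resource upper
bounds `U`: if `l₁` dominates `l₂` then any feasible extension of `l₂` along an
arc `(i,j)` yields a feasible extension of `l₁`, and the extended label of `l₁`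
dominates the extended label of `l₂`. -/
theorem stmt1 {V : Type} [DecidableEq V] {k : ℕ}
    (carc : V → V → ℝ) (r : V → V → Fin k → ℝ) (U : Fin k → ℝ)
    (hr : ∀ i j t, 0 ≤ r i j t)
    (i j : V) (c₁ c₂ : ℝ) (S₁ S₂ : Finset V) (R₁ R₂ : Fin k → ℝ)
    -- l₁ dominates l₂ :
    (hc : c₁ ≤ c₂) (hS : S₁ ⊆ S₂) (hR : ∀ t, R₁ t ≤ R₂ t)
    -- extension of l₂ along (i,j) is feasible :
    (hj₂ : j ∉ S₂) (hU₂ : ∀ t, R₂ t + r i j t ≤ U t) :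
    -- extension of l₁ along (i,j) is feasible
    (j ∉ S₁ ∧ ∀ t, R₁ t + r i j t ≤ U t) ∧
    -- and the extended label of l₁ dominates the extended label of l₂
    (c₁ + carc i j ≤ c₂ + carc i j ∧ insert j S₁ ⊆ insert j S₂ ∧
      ∀ t, R₁ t + r i j t ≤ R₂ t + r i j t) := by
  refine ⟨⟨fun h => hj₂ (hS h), fun t => le_trans (add_le_add_left (hR t) _) (hU₂ t)⟩,
    add_le_add_left hc _, Finset.insert_subset_insert _ hS, fun t => add_le_add_left (hR t) _⟩
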